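/- arXiv:1501.00109 — 2 statements merged into one kernel-verified Lean document; each statement's English description precedes it below -/
import Mathlib

section
/- For every E₀>0 and m>0 there exists δ>0 with the following property: for every b>0, every measurable function ρ:B_b→[0,∞) such that G∘ρ is integrable with ∫_{B_b} G(ρ(x)) dx ≤ E₀, and every r∈(0,b] with ∫_{B_r} ρ(x) dx ≥ m, one has r ≥ δ. -/
open MeasureTheory Set Metric

noncomputable section

/-- `G(s) = s log s − s + 1` (with the convention `G(0) = 1`, which holds literally in
Lean since `Real.log 0 = 0`). -/
def Gfun (s : ℝ) : ℝ := s * Real.log s - s + 1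

lemma Gfun_nonneg {s : ℝ} (hs : 0 ≤ s) : 0 ≤ Gfun s := by
  rcases eq_or_lt_of_le hs with h | h
  · simp [Gfun, ← h]
  · have h1 : Real.log s⁻¹ ≤ s⁻¹ - 1 := Real.log_le_sub_one_of_pos (by positivity)
    rw [Real.log_inv] at h1
    have h2 : 1 - s⁻¹ ≤ Real.log s := by linarith
    have h3 : s * (1 - s⁻¹) ≤ s * Real.log s :=
      mul_le_mul_of_nonneg_left h2 hs
    have h4 : s * (1 - s⁻¹) = s - 1 := by field_simp
    unfold Gfun; nlinarith

lemma Gfun_key {K s : ℝ} (hK : 0 < K) (hs : 0 ≤ s) :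
    s ≤ Real.exp (1 + K) + Gfun s / K := by
  set M := Real.exp (1 + K) with hM
  rcases le_or_gt s M with h | h
  · have := Gfun_nonneg hs
    have : 0 ≤ Gfun s / K := by positivity
    linarith
  · have hspos : 0 < s := lt_trans (Real.exp_pos _) h
    have hlog : 1 + K ≤ Real.log s := by
      have := Real.log_le_log (Real.exp_pos _) h.le
      rwa [Real.log_exp] at this
    have : s * K ≤ Gfun s := by
      have : s * (1 + K) ≤ s * Real.log s :=
        mul_le_mul_of_nonneg_left hlog hspos.le
      unfold Gfun; nlinarith
    calc s = s * K / K := by field_simp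
    _ ≤ Gfun s / K := by gcongr
    _ ≤ M + Gfun s / K := by have := Real.exp_pos (1 + K); linarith

/-- for every `E₀ > 0` and `m > 0` there exists `δ > 0` such that for every
`b > 0`, every measurable nonnegative `ρ : B_b → [0,∞)` with `∫_{B_b} G(ρ) ≤ E₀`, and
every `r ∈ (0,b]` with `∫_{B_r} ρ ≥ m`, one has `r ≥ δ`. -/
theorem radius_lower_bound_from_entropy (E₀ m : ℝ) (hE₀ : 0 < E₀) (hm : 0 < m) :
    ∃ δ > 0, ∀ (b : ℝ), 0 < b →
      ∀ ρ : EuclideanSpace ℝ (Fin 3) → ℝ, Measurable ρ → (∀ x, 0 ≤ ρ x) →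
        IntegrableOn (fun x => Gfun (ρ x)) (ball (0 : EuclideanSpace ℝ (Fin 3)) b) volume →
        (∫ x in ball (0 : EuclideanSpace ℝ (Fin 3)) b, Gfun (ρ x)) ≤ E₀ →
        ∀ r : ℝ, 0 < r → r ≤ b →
          m ≤ (∫ x in ball (0 : EuclideanSpace ℝ (Fin 3)) r, ρ x) →
          δ ≤ r := by
  set K : ℝ := 2 * E₀ / m with hKdef
  have hK : 0 < K := by positivity
  set M : ℝ := Real.exp (1 + K) with hMdef
  have hMpos : 0 < M := Real.exp_pos _
  set v : ℝ := (volume (ball (0 : EuclideanSpace ℝ (Fin 3)) 1)).toReal with hvdef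
  have hvne : volume (ball (0 : EuclideanSpace ℝ (Fin 3)) 1) ≠ ⊤ :=
    (measure_ball_lt_top).ne
  have hvpos : 0 < v := ENNReal.toReal_pos (measure_ball_pos _ _ one_pos).ne' hvne
  refine ⟨(m / (2 * M * v)) ^ (3⁻¹ : ℝ), by positivity, ?_⟩
  intro b hb ρ hρm hρ0 hInt hIntle r hr hrb hmle
  have hsub : ball (0 : EuclideanSpace ℝ (Fin 3)) r ⊆ ball 0 b := ball_subset_ball hrb
  have hIntr : IntegrableOn (fun x => Gfun (ρ x)) (ball (0 : EuclideanSpace ℝ (Fin 3)) r) volume :=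
    hInt.mono_set hsub
  have hballfin : volume (ball (0 : EuclideanSpace ℝ (Fin 3)) r) ≠ ⊤ := measure_ball_lt_top.ne
  have hIntRHS : IntegrableOn (fun x => M + Gfun (ρ x) / K)
      (ball (0 : EuclideanSpace ℝ (Fin 3)) r) volume := by
    exact (integrableOn_const measure_ball_lt_top.ne).add (hIntr.div_const K)
  have hpt : ∀ x, ρ x ≤ M + Gfun (ρ x) / K := fun x => Gfun_key hK (hρ0 x)
  have hρInt : IntegrableOn ρ (ball (0 : EuclideanSpace ℝ (Fin 3)) r) volume := by
    refine Integrable.mono' hIntRHS hρm.aestronglyMeasurable.restrict ?_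
    filter_upwards with x
    rw [Real.norm_eq_abs, abs_of_nonneg (hρ0 x)]
    exact hpt x
  have h1 : (∫ x in ball (0 : EuclideanSpace ℝ (Fin 3)) r, ρ x)
      ≤ ∫ x in ball (0 : EuclideanSpace ℝ (Fin 3)) r, (M + Gfun (ρ x) / K) :=
    setIntegral_mono hρInt hIntRHS hpt
  have hGr : (∫ x in ball (0 : EuclideanSpace ℝ (Fin 3)) r, Gfun (ρ x)) ≤ E₀ := by
    refine le_trans (setIntegral_mono_set hInt ?_ (HasSubset.Subset.eventuallyLE hsub)) hIntle
    filter_upwards with x using Gfun_nonneg (hρ0 x)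
  have h2 : (∫ x in ball (0 : EuclideanSpace ℝ (Fin 3)) r, (M + Gfun (ρ x) / K))
      = (volume (ball (0 : EuclideanSpace ℝ (Fin 3)) r)).toReal * M
        + (∫ x in ball (0 : EuclideanSpace ℝ (Fin 3)) r, Gfun (ρ x)) / K := by
    rw [integral_add (integrableOn_const (C := M) measure_ball_lt_top.ne) (hIntr.div_const K),
      setIntegral_const, integral_div, smul_eq_mul, measureReal_def]
  have hEK : E₀ / K = m / 2 := by
    rw [hKdef]; field_simp
  have hvol : (volume (ball (0 : EuclideanSpace ℝ (Fin 3)) r)).toReal = r ^ 3 * v := by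
    rw [Measure.addHaar_ball volume (0 : EuclideanSpace ℝ (Fin 3)) hr.le]
    rw [ENNReal.toReal_mul, ENNReal.toReal_ofReal (by positivity)]
    congr 2
    simp [finrank_euclideanSpace]
  have h3 : m ≤ r ^ 3 * v * M + m / 2 := by
    have hdiv : (∫ x in ball (0 : EuclideanSpace ℝ (Fin 3)) r, Gfun (ρ x)) / K ≤ m / 2 := by
      rw [← hEK]; gcongr
    calc m ≤ (∫ x in ball (0 : EuclideanSpace ℝ (Fin 3)) r, ρ x) := hmle
    _ ≤ (volume (ball (0 : EuclideanSpace ℝ (Fin 3)) r)).toReal * M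
        + (∫ x in ball (0 : EuclideanSpace ℝ (Fin 3)) r, Gfun (ρ x)) / K := by
        rw [← h2]; exact h1
    _ ≤ r ^ 3 * v * M + m / 2 := by rw [hvol]; linarith
  have h4 : m / (2 * M * v) ≤ r ^ 3 := by
    rw [div_le_iff₀ (by positivity)]; nlinarith
  calc (m / (2 * M * v)) ^ (3⁻¹ : ℝ) ≤ (r ^ 3) ^ (3⁻¹ : ℝ) := by
        apply Real.rpow_le_rpow (by positivity) h4 (by norm_num)
  _ = r := by
        rw [← Real.rpow_natCast r 3, ← Real.rpow_mul hr.le]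
        norm_num
end
end

section
/- Let a<b' be real numbers and let θ:[a,b']→ℝ be continuously differentiable with θ(s)>0 for all s∈[a,b']. Then for every h∈[a,b']: θ(h) ≤ 2(b'−a)⁻¹ ∫_a^{b'} θ(s) ds + (1/2)(∫_a^{b'} θ(s) ds)(∫_a^{b'} θ'(s)²/θ(s)² ds). -/
open MeasureTheory Set intervalIntegral

lemma amgm_aux (x u l : ℝ) (hu : 0 < u) (hl : 0 < l) :
    |x| / (2 * u) ≤ l * (x ^ 2 / (u ^ 2) ^ 2) / 8 + u ^ 2 / (2 * l) := by
  have heq : l * (x ^ 2 / (u ^ 2) ^ 2) / 8 + u ^ 2 / (2 * l) - |x| / (2 * u)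
      = (l * |x| - 2 * u ^ 3) ^ 2 / (8 * l * u ^ 4) := by
    field_simp; ring_nf; rw [sq_abs]
  have h2 : 0 ≤ (l * |x| - 2 * u ^ 3) ^ 2 / (8 * l * u ^ 4) := by positivity
  linarith

/-- if `θ` is continuously differentiable and positive on `[a,b']`, then for
every `h ∈ [a,b']`,
`θ(h) ≤ 2(b'−a)⁻¹ ∫_a^{b'} θ + (1/2)(∫_a^{b'} θ)(∫_a^{b'} θ'²/θ²)`. -/
theorem pointwise_temperature_bound
    (a b' : ℝ) (hab : a < b') (θ θ' : ℝ → ℝ)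
    (hderiv : ∀ s ∈ Icc a b', HasDerivWithinAt θ (θ' s) (Icc a b') s)
    (hcont : ContinuousOn θ' (Icc a b'))
    (hpos : ∀ s ∈ Icc a b', 0 < θ s) :
    ∀ h ∈ Icc a b',
      θ h ≤ 2 * (b' - a)⁻¹ * (∫ s in a..b', θ s)
        + (1 / 2) * (∫ s in a..b', θ s) * (∫ s in a..b', (θ' s) ^ 2 / (θ s) ^ 2) := by
  intro h hh
  set J := ∫ s in a..b', θ s with hJdef
  set I := ∫ s in a..b', (θ' s) ^ 2 / (θ s) ^ 2 with hIdef
  -- continuity of θ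
  have hθc : ContinuousOn θ (Icc a b') := fun s hs => (hderiv s hs).continuousWithinAt
  -- integrand continuity
  have hIc : ContinuousOn (fun s => (θ' s) ^ 2 / (θ s) ^ 2) (Icc a b') := by
    exact (hcont.pow 2).div (hθc.pow 2) (fun s hs => pow_ne_zero 2 (hpos s hs).ne')
  have huIcc : uIcc a b' = Icc a b' := uIcc_of_le hab.le
  have hθint : IntervalIntegrable θ volume a b' :=
    (huIcc ▸ hθc).intervalIntegrable
  have hIint : IntervalIntegrable (fun s => (θ' s) ^ 2 / (θ s) ^ 2) volume a b' :=
    (huIcc ▸ hIc).intervalIntegrable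
  -- J > 0
  have hJpos : 0 < J :=
    intervalIntegral_pos_of_pos_on hθint (fun x hx => hpos x ⟨hx.1.le, hx.2.le⟩) hab
  -- I ≥ 0
  have hI0 : 0 ≤ I :=
    intervalIntegral.integral_nonneg hab.le (fun s _ => by positivity)
  -- min point
  obtain ⟨s₀, hs₀, hmin⟩ :=
    isCompact_Icc.exists_isMinOn (nonempty_Icc.2 hab.le) hθc
  have hθs₀pos : 0 < θ s₀ := hpos s₀ hs₀
  -- mean value: θ s₀ * (b' - a) ≤ J
  have hmean : θ s₀ * (b' - a) ≤ J := by
    have hconst : (∫ _ in a..b', θ s₀) = θ s₀ * (b' - a) := by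
      simp [mul_comm]
    rw [← hconst]
    exact intervalIntegral.integral_mono_on hab.le intervalIntegrable_const hθint
      (fun x hx => hmin hx)
  -- sqrt θ and its derivative
  set g : ℝ → ℝ := fun x => Real.sqrt (θ x) with hgdef
  set f : ℝ → ℝ := fun s => θ' s / (2 * Real.sqrt (θ s)) with hfdef
  have hgc : ContinuousOn g (Icc a b') := Real.continuous_sqrt.comp_continuousOn hθc
  have hfc : ContinuousOn f (Icc a b') := by
    apply hcont.div (continuousOn_const.mul (Real.continuous_sqrt.comp_continuousOn hθc))
    intro s hs
    have : 0 < Real.sqrt (θ s) := Real.sqrt_pos.2 (hpos s hs)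
    exact mul_ne_zero two_ne_zero this.ne'
  -- FTC
  have hftc : g h - g s₀ = ∫ s in s₀..h, f s := by
    symm
    apply intervalIntegral.integral_eq_sub_of_hasDeriv_right
    · exact hgc.mono ((uIcc_subset_uIcc (huIcc ▸ hs₀) (huIcc ▸ hh)).trans huIcc.subset)
    · intro x hx
      have hxmem : x ∈ Ioo a b' := by
        constructor
        · exact lt_of_le_of_lt (le_min hs₀.1 hh.1) hx.1
        · exact lt_of_lt_of_le hx.2 (max_le hs₀.2 hh.2)
      have hxicc : x ∈ Icc a b' := Ioo_subset_Icc_self hxmem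
      have hd : HasDerivAt θ (θ' x) x :=
        (hderiv x hxicc).hasDerivAt (Icc_mem_nhds hxmem.1 hxmem.2)
      have hsq : HasDerivAt (fun y => Real.sqrt (θ y))
          (1 / (2 * Real.sqrt (θ x)) * θ' x) x :=
        (Real.hasDerivAt_sqrt (hpos x hxicc).ne').comp x hd
      have : (1 : ℝ) / (2 * Real.sqrt (θ x)) * θ' x = f x := by
        simp [hfdef]; ring
      exact (this ▸ hsq).hasDerivWithinAt
    · exact (hfc.mono ((uIcc_subset_uIcc (huIcc ▸ hs₀) (huIcc ▸ hh)).trans huIcc.subset)).intervalIntegrable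
  set D := g h - g s₀ with hDdef
  have hD0 : 0 ≤ D := by
    have := hmin hh
    simp only [hDdef, hgdef, sub_nonneg]
    exact Real.sqrt_le_sqrt this
  -- key bound : for every l > 0, D ≤ l * I / 8 + J / (2 * l)
  have hbound : ∀ l : ℝ, 0 < l → D ≤ l * I / 8 + J / (2 * l) := by
    intro l hl
    -- bound function
    set B : ℝ → ℝ := fun s => l * ((θ' s) ^ 2 / (θ s) ^ 2) / 8 + θ s / (2 * l) with hBdef
    have hBc : ContinuousOn B (Icc a b') :=
      ((continuousOn_const.mul hIc).div_const 8).add (hθc.div_const (2 * l))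
    have hBnonneg : ∀ s ∈ Icc a b', 0 ≤ B s := by
      intro s hs
      have := hpos s hs
      have : 0 ≤ θ s / (2 * l) := by positivity
      simp only [hBdef]
      have h2 : 0 ≤ l * ((θ' s) ^ 2 / (θ s) ^ 2) / 8 := by positivity
      linarith
    have hfleB : ∀ s ∈ Icc a b', |f s| ≤ B s := by
      intro s hs
      have hts := hpos s hs
      have hu2 : Real.sqrt (θ s) ^ 2 = θ s := Real.sq_sqrt hts.le
      have := amgm_aux (θ' s) (Real.sqrt (θ s)) l (Real.sqrt_pos.2 hts) hl
      rw [hu2] at this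
      simpa [hfdef, hBdef, abs_div, abs_of_pos (by positivity : (0:ℝ) < 2 * Real.sqrt (θ s))]
        using this
    have hBint : IntervalIntegrable B volume a b' := (huIcc ▸ hBc).intervalIntegrable
    have hBval : (∫ s in a..b', B s) = l * I / 8 + J / (2 * l) := by
      rw [hBdef]
      rw [intervalIntegral.integral_add (f := fun s => l * ((θ' s) ^ 2 / (θ s) ^ 2) / 8)
        (g := fun s => θ s / (2 * l)) ((continuousOn_const.mul hIc).div_const 8 |>.mono
        huIcc.subset).intervalIntegrable ((hθc.div_const (2*l)).mono huIcc.subset).intervalIntegrable]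
      rw [intervalIntegral.integral_div, intervalIntegral.integral_div,
        intervalIntegral.integral_const_mul]
    -- D = ∫ s in s₀..h, f s ≤ ∫ B over [a,b']
    rw [hftc, ← hBval]
    rcases le_total s₀ h with hc | hc
    · calc ∫ s in s₀..h, f s ≤ ∫ s in s₀..h, B s := by
            apply intervalIntegral.integral_mono_on hc
            · exact (hfc.mono (Icc_subset_Icc hs₀.1 hh.2) |>.mono
                (by rw [uIcc_of_le hc])).intervalIntegrable
            · exact (hBc.mono (Icc_subset_Icc hs₀.1 hh.2) |>.mono
                (by rw [uIcc_of_le hc])).intervalIntegrable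
            · intro x hx
              exact le_trans (le_abs_self _) (hfleB x ⟨hs₀.1.trans hx.1, hx.2.trans hh.2⟩)
      _ ≤ ∫ s in a..b', B s := by
            apply intervalIntegral.integral_mono_interval hs₀.1 hc hh.2 _ hBint
            filter_upwards [ae_restrict_mem measurableSet_Ioc] with x hx
            exact hBnonneg x ⟨hx.1.le, hx.2⟩
    · calc ∫ s in s₀..h, f s = -∫ s in h..s₀, f s := by
            rw [intervalIntegral.integral_symm]
      _ ≤ ∫ s in h..s₀, B s := by
            rw [neg_le]
            have : ∫ s in h..s₀, -B s ≤ ∫ s in h..s₀, f s := by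
              apply intervalIntegral.integral_mono_on hc
              · exact ((hBc.mono (Icc_subset_Icc hh.1 hs₀.2)).neg |>.mono
                  (by rw [uIcc_of_le hc])).intervalIntegrable
              · exact (hfc.mono (Icc_subset_Icc hh.1 hs₀.2) |>.mono
                  (by rw [uIcc_of_le hc])).intervalIntegrable
              · intro x hx
                have := hfleB x ⟨hh.1.trans hx.1, hx.2.trans hs₀.2⟩
                have := neg_abs_le (f x)
                linarith [hfleB x ⟨hh.1.trans hx.1, hx.2.trans hs₀.2⟩]
            rw [intervalIntegral.integral_neg] at this
            linarith
      _ ≤ ∫ s in a..b', B s := by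
            apply intervalIntegral.integral_mono_interval hh.1 hc hs₀.2 _ hBint
            filter_upwards [ae_restrict_mem measurableSet_Ioc] with x hx
            exact hBnonneg x ⟨hx.1.le, hx.2⟩
  -- conclude D ≤ √(J*I)/2, then square
  have hDsq : D ^ 2 ≤ J * I / 4 := by
    rcases eq_or_lt_of_le hI0 with hI | hI
    · -- I = 0 : D ≤ 0 hence D = 0
      have hD00 : D = 0 := by
        by_contra hne
        have hDpos : 0 < D := lt_of_le_of_ne hD0 (Ne.symm hne)
        have := hbound (J / D) (div_pos hJpos hDpos)
        rw [← hI] at this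
        have hh2 : J / (2 * (J / D)) = D / 2 := by
          field_simp
        rw [hh2] at this
        linarith
      rw [hD00, ← hI]
      norm_num
    · -- I > 0
      set p := Real.sqrt J with hpdef
      set q := Real.sqrt I with hqdef
      have hJs : p ^ 2 = J := Real.sq_sqrt hJpos.le
      have hIs : q ^ 2 = I := Real.sq_sqrt hI.le
      have hJspos : 0 < p := Real.sqrt_pos.2 hJpos
      have hIspos : 0 < q := Real.sqrt_pos.2 hI
      have hl : 0 < 2 * p / q := by positivity
      have hb := hbound _ hl
      rw [← hJs, ← hIs] at hb
      have heq : 2 * p / q * q ^ 2 / 8 + p ^ 2 / (2 * (2 * p / q)) = p * q / 2 := by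
        field_simp
        ring
      rw [heq] at hb
      calc D ^ 2 ≤ (p * q / 2) ^ 2 := by
            apply sq_le_sq' _ hb
            nlinarith [mul_pos hJspos hIspos]
        _ = J * I / 4 := by rw [div_pow, mul_pow, hJs, hIs]; ring
  -- θ h = (g s₀ + D)^2
  have hgh : θ h = (Real.sqrt (θ s₀) + D) ^ 2 := by
    have : Real.sqrt (θ s₀) + D = Real.sqrt (θ h) := by simp [hDdef, hgdef]
    rw [this, Real.sq_sqrt (hpos h hh).le]
  have hsqs₀ : Real.sqrt (θ s₀) ^ 2 = θ s₀ := Real.sq_sqrt hθs₀pos.le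
  have hcross : 2 * Real.sqrt (θ s₀) * D ≤ θ s₀ + D ^ 2 := by
    nlinarith [sq_nonneg (Real.sqrt (θ s₀) - D)]
  have hexp : (Real.sqrt (θ s₀) + D) ^ 2 = θ s₀ + 2 * Real.sqrt (θ s₀) * D + D ^ 2 := by
    rw [add_sq, hsqs₀]
  have hkey : θ h ≤ 2 * θ s₀ + J * I / 2 := by
    rw [hgh, hexp]
    clear_value D J I
    linarith
  -- final
  have hfin : θ s₀ ≤ (b' - a)⁻¹ * J := by
    rw [le_inv_mul_iff₀ (by linarith : (0:ℝ) < b' - a)]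
    linarith [hmean]
  calc θ h ≤ 2 * θ s₀ + J * I / 2 := hkey
    _ ≤ 2 * ((b' - a)⁻¹ * J) + J * I / 2 := by linarith
    _ = 2 * (b' - a)⁻¹ * J + (1 / 2) * J * I := by ring
end
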